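/- Let B be a complete Boolean algebra of uniform density, and let A be a complete subalgebra of B whose density is strictly less than the density of B. Then for every v ∈ B there exists u ∈ B independent over A (i.e., a · u ≠ 0 and a − u ≠ 0 for all nonzero a ∈ A) such that v belongs to the subalgebra generated by A together with u. -/

import Mathlib

def Subalg {B : Type*} [BooleanAlgebra B] (A : Set B) : Prop :=
  ⊥ ∈ A ∧ ⊤ ∈ A ∧ (∀ x ∈ A, ∀ y ∈ A, x ⊔ y ∈ A) ∧ (∀ x ∈ A, xᶜ ∈ A)

/-- Density of the Boolean algebra `B ↾ a`: the least cardinality of a set of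
nonzero elements below `a` that is dense below `a`. -/
noncomputable def densBelow {B : Type*} [BooleanAlgebra B] (a : B) : Cardinal :=
  sInf {c : Cardinal | ∃ D : Set B, (∀ d ∈ D, d ≤ a ∧ d ≠ ⊥) ∧
    (∀ b : B, b ≤ a → b ≠ ⊥ → ∃ d ∈ D, d ≤ b) ∧ c = Cardinal.mk ↥D}

/-- Density of the subalgebra carried by the set `A`: the least cardinality of a
subset of `A⁺` dense in `A⁺`. -/
noncomputable def densOf {B : Type*} [BooleanAlgebra B] (A : Set B) : Cardinal :=
  sInf {c : Cardinal | ∃ D : Set B, D ⊆ A ∧ (∀ d ∈ D, d ≠ ⊥) ∧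
    (∀ b ∈ A, b ≠ ⊥ → ∃ d ∈ D, d ≤ b) ∧ c = Cardinal.mk ↥D}

/-- Vladimirov's Lemma (Lemma 3.5): let `B` be a complete Boolean algebra of uniform
density and `A` a complete subalgebra of `B` of density less than the density of `B`.
Then for every `v ∈ B` there is `u ∈ B` independent over `A` (i.e. `a ⊓ u ≠ ⊥` and
`a \ u ≠ ⊥` for all nonzero `a ∈ A`) with `v ∈ A(u) = {a₁ ⊓ u ⊔ (a₂ \ u) : a₁, a₂ ∈ A}`. -/
theorem vladimirov {B : Type*} [CompleteBooleanAlgebra B] (A : Set B)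
    (hA : Subalg A) (hAcomplete : ∀ X ⊆ A, sSup X ∈ A)
    (hunif : ∀ a : B, a ≠ ⊥ → densBelow a = densBelow (⊤ : B))
    (hdens : densOf A < densBelow (⊤ : B)) :
    ∀ v : B, ∃ u : B, (∀ a ∈ A, a ≠ ⊥ → a ⊓ u ≠ ⊥ ∧ a \ u ≠ ⊥) ∧
      ∃ a₁ ∈ A, ∃ a₂ ∈ A, v = a₁ ⊓ u ⊔ (a₂ \ u) := by
  obtain ⟨hbot, htop, hsupm, hcompl⟩ := hA
  have hinfm : ∀ x ∈ A, ∀ y ∈ A, x ⊓ y ∈ A := by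
    intro x hx y hy
    have : (xᶜ ⊔ yᶜ)ᶜ ∈ A := hcompl _ (hsupm _ (hcompl _ hx) _ (hcompl _ hy))
    simpa [compl_sup] using this
  -- the upper projection onto A
  set h : B → B := fun x => (sSup {a | a ∈ A ∧ a ⊓ x = ⊥})ᶜ with hh
  have hmem : ∀ x, h x ∈ A := fun x => hcompl _ (hAcomplete _ (fun a ha => ha.1))
  have hle : ∀ x, x ≤ h x := by
    intro x
    rw [hh]
    simp only [le_compl_iff_disjoint_right, disjoint_sSup_iff]
    intro a ha
    exact disjoint_iff.2 (by rw [inf_comm]; exact ha.2)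
  have hkey : ∀ a ∈ A, ∀ x : B, (a ⊓ h x = ⊥ ↔ a ⊓ x = ⊥) := by
    intro a ha x
    constructor
    · intro h1
      have : a ⊓ x ≤ a ⊓ h x := inf_le_inf_left a (hle x)
      exact le_bot_iff.1 (h1 ▸ this)
    · intro h1
      have h2 : a ≤ sSup {a | a ∈ A ∧ a ⊓ x = ⊥} := le_sSup ⟨ha, h1⟩
      rw [hh]
      simp only
      apply le_bot_iff.1
      calc a ⊓ (sSup {a | a ∈ A ∧ a ⊓ x = ⊥})ᶜ
          ≤ sSup {a | a ∈ A ∧ a ⊓ x = ⊥} ⊓ (sSup {a | a ∈ A ∧ a ⊓ x = ⊥})ᶜ :=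
            inf_le_inf_right _ h2
        _ = ⊥ := inf_compl_eq_bot
  have hmin : ∀ x : B, ∀ a ∈ A, x ≤ a → h x ≤ a := by
    intro x a ha hxa
    rw [hh]
    simp only
    rw [compl_le_iff_compl_le]
    refine le_sSup ⟨hcompl _ ha, ?_⟩
    have : aᶜ ⊓ x ≤ aᶜ ⊓ a := inf_le_inf_left _ hxa
    exact le_bot_iff.1 (by simpa using this)
  -- h (x ⊓ a) = a when a ∈ A and a ≤ h x
  have hinfA : ∀ x : B, ∀ a ∈ A, a ≤ h x → h (x ⊓ a) = a := by
    intro x a ha hax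
    apply le_antisymm
    · exact hmin _ _ ha inf_le_right
    · have h1 : x ≤ h (x ⊓ a) ⊔ aᶜ := by
        calc x = x ⊓ a ⊔ x ⊓ aᶜ := by rw [← inf_sup_left, sup_compl_eq_top, inf_top_eq]
          _ ≤ h (x ⊓ a) ⊔ aᶜ := sup_le_sup (hle _) inf_le_right
      have h2 : h x ≤ h (x ⊓ a) ⊔ aᶜ :=
        hmin _ _ (hsupm _ (hmem _) _ (hcompl _ ha)) h1
      calc a = a ⊓ h x := (inf_eq_left.2 hax).symm
        _ ≤ a ⊓ (h (x ⊓ a) ⊔ aᶜ) := inf_le_inf_left _ h2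
        _ = a ⊓ h (x ⊓ a) ⊔ a ⊓ aᶜ := by rw [inf_sup_left]
        _ ≤ h (x ⊓ a) := by simp
  -- obtain a dense subset D of A of minimal cardinality
  have hne : {c : Cardinal | ∃ D : Set B, D ⊆ A ∧ (∀ d ∈ D, d ≠ ⊥) ∧
      (∀ b ∈ A, b ≠ ⊥ → ∃ d ∈ D, d ≤ b) ∧ c = Cardinal.mk ↥D}.Nonempty := by
    refine ⟨Cardinal.mk ↥(A \ {⊥}), A \ {⊥}, Set.diff_subset, ?_, ?_, rfl⟩
    · intro d hd; exact hd.2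
    · intro b hb hb0; exact ⟨b, ⟨hb, hb0⟩, le_refl b⟩
  obtain ⟨D, hDA, hD0, hDd, hDc⟩ : ∃ D : Set B, D ⊆ A ∧ (∀ d ∈ D, d ≠ ⊥) ∧
      (∀ b ∈ A, b ≠ ⊥ → ∃ d ∈ D, d ≤ b) ∧ densOf A = Cardinal.mk ↥D := csInf_mem hne
  -- claim C: every nonzero z contains a disjoint pair with equal projections
  have pairC : ∀ z : B, z ≠ ⊥ →
      ∃ x y : B, x ≠ ⊥ ∧ y ≠ ⊥ ∧ x ⊓ y = ⊥ ∧ x ⊔ y ≤ z ∧ h x = h y := by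
    intro z hz
    by_contra hcon
    push_neg at hcon
    -- the trace of D on z is dense below z
    set T : Set B := ((fun d => d ⊓ z) '' D) \ {⊥} with hT
    have hlow : densBelow (⊤ : B) ≤ Cardinal.mk ↥T := by
      rw [← hunif z hz]
      apply csInf_le'
      refine ⟨T, ?_, ?_, rfl⟩
      · rintro e ⟨⟨d, hd, rfl⟩, he0⟩
        exact ⟨inf_le_right, by simpa using he0⟩
      · intro b hbz hb0
        -- find a ∈ A with a ⊓ z ≤ b and a ⊓ z ≠ ⊥
        obtain ⟨a, haA, haz, haz0⟩ : ∃ a ∈ A, a ⊓ z ≤ b ∧ a ⊓ z ≠ ⊥ := by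
          by_cases hzb : z \ b = ⊥
          · have : z ≤ b := sdiff_eq_bot_iff.1 hzb
            have hbz' : b = z := le_antisymm hbz this
            exact ⟨⊤, htop, by simp [hbz'], by simpa using hz⟩
          · have hdisj : h b ⊓ h (z \ b) = ⊥ := by
              by_contra hnd
              set a' := h b ⊓ h (z \ b) with ha'
              have ha'A : a' ∈ A := hinfm _ (hmem _) _ (hmem _)
              apply hcon (b ⊓ a') ((z \ b) ⊓ a')
              · intro hx
                have : a' ⊓ b = ⊥ := by rw [inf_comm]; exact hx
                have := (hkey a' ha'A b).2 this
                exact hnd ((inf_eq_left.2 (inf_le_left : a' ≤ h b)).symm.trans this)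
              · intro hy
                have : a' ⊓ (z \ b) = ⊥ := by rw [inf_comm]; exact hy
                have := (hkey a' ha'A (z \ b)).2 this
                exact hnd ((inf_eq_left.2 (inf_le_right : a' ≤ h (z \ b))).symm.trans this)
              · apply le_bot_iff.1
                calc b ⊓ a' ⊓ ((z \ b) ⊓ a') ≤ b ⊓ (z \ b) :=
                    inf_le_inf inf_le_left inf_le_left
                  _ = ⊥ := by simp [inf_sdiff_self_right]
              · exact sup_le (le_trans inf_le_left hbz) (le_trans inf_le_left sdiff_le)
              · rw [hinfA b a' ha'A inf_le_left, hinfA (z \ b) a' ha'A inf_le_right]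
            have h1 : h b ⊓ (z \ b) = ⊥ := (hkey (h b) (hmem b) (z \ b)).1 hdisj
            refine ⟨h b, hmem b, ?_, ?_⟩
            · have hz' : z = b ⊔ z \ b := (sup_sdiff_cancel' le_rfl hbz).symm
              have heq : h b ⊓ z = b := by
                conv_lhs => rw [hz']
                rw [inf_sup_left, h1, inf_eq_right.2 (hle b), sup_bot_eq]
              exact le_of_eq heq
            · intro h0
              apply hb0
              have : b ≤ h b ⊓ z := le_inf (hle b) hbz
              exact le_bot_iff.1 (h0 ▸ this)
        -- use density of D inside a ⊓ h (a ⊓ z)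
        have hstA : a ⊓ h (a ⊓ z) ∈ A := hinfm _ haA _ (hmem _)
        have hst0 : a ⊓ h (a ⊓ z) ≠ ⊥ := by
          intro h0
          apply haz0
          have : a ⊓ z ≤ a ⊓ h (a ⊓ z) := le_inf inf_le_left (hle _)
          exact le_bot_iff.1 (h0 ▸ this)
        obtain ⟨d, hd, hdle⟩ := hDd _ hstA hst0
        have hd1 : d ⊓ z ≠ ⊥ := by
          intro h0
          have h1 : d ⊓ (a ⊓ z) = ⊥ := by
            apply le_bot_iff.1
            calc d ⊓ (a ⊓ z) ≤ d ⊓ z := inf_le_inf_left _ inf_le_right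
              _ = ⊥ := h0
          have h2 := (hkey d (hDA hd) (a ⊓ z)).2 h1
          have h3 : d ≤ h (a ⊓ z) := le_trans hdle inf_le_right
          exact hD0 d hd (le_bot_iff.1 (h2 ▸ le_inf le_rfl h3))
        refine ⟨d ⊓ z, ⟨⟨d, hd, rfl⟩, by simpa using hd1⟩, ?_⟩
        calc d ⊓ z ≤ a ⊓ z := inf_le_inf_right _ (le_trans hdle inf_le_left)
          _ ≤ b := haz
    have hhigh : Cardinal.mk ↥T ≤ densOf A := by
      rw [hDc]
      exact le_trans (Cardinal.mk_le_mk_of_subset Set.diff_subset) Cardinal.mk_image_le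
    exact absurd (lt_of_lt_of_le hdens (le_trans hlow hhigh)) (lt_irrefl _)
  -- top is nonzero
  have htopne : (⊤ : B) ≠ ⊥ := by
    intro h0
    have h1 : densBelow (⊤ : B) ≤ 0 := by
      apply csInf_le'
      refine ⟨∅, by simp, ?_, by simp⟩
      intro b hb hb0
      exact absurd (le_bot_iff.1 (h0 ▸ hb)) hb0
    rw [le_zero_iff] at h1
    rw [h1] at hdens
    exact absurd hdens (by simp)
  -- Zorn: maximal family of disjoint pairs with equal projections
  set S : Set (Set (B × B)) := {F | (∀ p ∈ F, p.1 ≠ ⊥ ∧ p.2 ≠ ⊥ ∧ p.1 ⊓ p.2 = ⊥ ∧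
      h p.1 = h p.2) ∧
      ∀ p ∈ F, ∀ q ∈ F, p ≠ q → (p.1 ⊔ p.2) ⊓ (q.1 ⊔ q.2) = ⊥} with hS
  obtain ⟨m, hm⟩ : ∃ m, Maximal (fun F => F ∈ S) m := by
    apply zorn_subset
    intro c hcS hchain
    refine ⟨⋃₀ c, ⟨?_, ?_⟩, fun s hs => Set.subset_sUnion_of_mem hs⟩
    · rintro p ⟨F, hF, hpF⟩
      exact (hcS hF).1 p hpF
    · rintro p ⟨F, hF, hpF⟩ q ⟨G, hG, hqG⟩ hpq
      rcases hchain.total hF hG with hFG | hGF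
      · exact (hcS hG).2 p (hFG hpF) q hqG hpq
      · exact (hcS hF).2 p hpF q (hGF hqG) hpq
  obtain ⟨⟨hm1, hm2⟩, hmmax⟩ := hm
  set t : B := sSup ((fun p : B × B => p.1 ⊔ p.2) '' m) with ht
  have htt : t = ⊤ := by
    by_contra htne
    have htc : tᶜ ≠ ⊥ := fun h0 => htne (compl_eq_bot.1 h0)
    obtain ⟨x, y, hx0, hy0, hxy, hxyle, hhxy⟩ := pairC tᶜ htc
    have hmemt : ∀ p ∈ m, p.1 ⊔ p.2 ≤ t := fun p hp => le_sSup ⟨p, hp, rfl⟩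
    have hnotm : (x, y) ∉ m := by
      intro hmm
      apply hx0
      apply le_bot_iff.1
      calc x ≤ (x ⊔ y) ⊓ tᶜ := le_inf le_sup_left (le_trans le_sup_left hxyle)
        _ ≤ t ⊓ tᶜ := inf_le_inf_right _ (hmemt _ hmm)
        _ = ⊥ := inf_compl_eq_bot
    have hins : insert (x, y) m ∈ S := by
      constructor
      · rintro p (rfl | hp)
        · exact ⟨hx0, hy0, hxy, hhxy⟩
        · exact hm1 p hp
      · have hdis : ∀ p ∈ m, (p.1 ⊔ p.2) ⊓ (x ⊔ y) = ⊥ := by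
          intro p hp
          apply le_bot_iff.1
          calc (p.1 ⊔ p.2) ⊓ (x ⊔ y) ≤ t ⊓ tᶜ := inf_le_inf (hmemt _ hp) hxyle
            _ = ⊥ := inf_compl_eq_bot
        rintro p (rfl | hp) q (rfl | hq) hpq
        · exact absurd rfl hpq
        · rw [inf_comm]; exact hdis q hq
        · exact hdis p hp
        · exact hm2 p hp q hq hpq
    have := hmmax hins (Set.subset_insert _ _)
    exact hnotm (this (Set.mem_insert _ _))
  -- u₀ is independent over A
  set u₀ : B := sSup (Prod.fst '' m) with hu₀def
  have hu₀ : ∀ a ∈ A, a ≠ ⊥ → a ⊓ u₀ ≠ ⊥ ∧ a \ u₀ ≠ ⊥ := by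
    intro a haA ha
    obtain ⟨p, hpm, hap⟩ : ∃ p ∈ m, a ⊓ (p.1 ⊔ p.2) ≠ ⊥ := by
      by_contra hno
      push_neg at hno
      apply ha
      have : a ⊓ t = ⊥ := by
        rw [ht, inf_sSup_eq]
        apply le_bot_iff.1
        apply iSup_le; intro b; apply iSup_le; rintro ⟨p, hp, rfl⟩
        exact le_of_eq (hno p hp)
      simpa [htt] using this
    obtain ⟨hp1, hp2, hp12, hph⟩ := hm1 p hpm
    have hboth : a ⊓ p.1 ≠ ⊥ ∧ a ⊓ p.2 ≠ ⊥ := by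
      have hiff : (a ⊓ p.1 = ⊥) ↔ (a ⊓ p.2 = ⊥) := by
        rw [← hkey a haA p.1, ← hkey a haA p.2, hph]
      by_cases h1 : a ⊓ p.1 = ⊥
      · exact absurd (by rw [inf_sup_left, h1, hiff.1 h1, sup_bot_eq]) hap
      · exact ⟨h1, fun h2 => h1 (hiff.2 h2)⟩
    constructor
    · intro h0
      apply hboth.1
      apply le_bot_iff.1
      calc a ⊓ p.1 ≤ a ⊓ u₀ := inf_le_inf_left _ (le_sSup ⟨p, hpm, rfl⟩)
        _ = ⊥ := h0
    · have hp2u : p.2 ⊓ u₀ = ⊥ := by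
        rw [hu₀def, inf_sSup_eq]
        apply le_bot_iff.1
        apply iSup_le; intro b; apply iSup_le; rintro ⟨q, hq, rfl⟩
        by_cases hpq : p = q
        · rw [← hpq, inf_comm]; exact le_of_eq hp12
        · calc p.2 ⊓ q.1 ≤ (p.1 ⊔ p.2) ⊓ (q.1 ⊔ q.2) :=
              inf_le_inf le_sup_right le_sup_left
            _ = ⊥ := hm2 p hpm q hq hpq
      intro h0
      apply hboth.2
      apply le_bot_iff.1
      have : a ⊓ p.2 ≤ a \ u₀ := by
        rw [le_sdiff]
        exact ⟨inf_le_left, disjoint_iff.2 (le_bot_iff.1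
          (le_trans (inf_le_inf_right _ inf_le_right) (le_of_eq hp2u)))⟩
      exact h0 ▸ this
  -- the projection part for v
  intro v
  set a₀ : B := sSup {a | a ∈ A ∧ a ≤ v} with ha₀def
  set a₁ : B := sSup {a | a ∈ A ∧ a ≤ vᶜ} with ha₁def
  have ha₀A : a₀ ∈ A := hAcomplete _ (fun a ha => ha.1)
  have ha₁A : a₁ ∈ A := hAcomplete _ (fun a ha => ha.1)
  have ha₀v : a₀ ≤ v := sSup_le (fun a ha => ha.2)
  have ha₁v : a₁ ≤ vᶜ := sSup_le (fun a ha => ha.2)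
  set c : B := (a₀ ⊔ a₁)ᶜ with hcdef
  have hcA : c ∈ A := hcompl _ (hsupm _ ha₀A _ ha₁A)
  set u : B := v ⊓ c ⊔ u₀ ⊓ cᶜ with hudef
  have hsplit : ∀ a ∈ A, a ≠ ⊥ → a ⊓ u ≠ ⊥ ∧ a \ u ≠ ⊥ := by
    intro a haA ha
    by_cases hac : a ⊓ c = ⊥
    · -- a ≤ cᶜ : u₀ takes over
      have hacc : a ≤ cᶜ := by
        rw [le_compl_iff_disjoint_right]
        exact disjoint_iff.2 hac
      obtain ⟨h1, h2⟩ := hu₀ a haA ha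
      constructor
      · intro h0
        apply h1
        apply le_bot_iff.1
        have heq : a ⊓ (u₀ ⊓ cᶜ) = a ⊓ u₀ := by
          rw [inf_comm u₀ cᶜ, ← inf_assoc, inf_eq_left.2 hacc]
        calc a ⊓ u₀ = a ⊓ (u₀ ⊓ cᶜ) := heq.symm
          _ ≤ a ⊓ u := inf_le_inf_left _ le_sup_right
          _ = ⊥ := h0
      · intro h0
        apply h2
        apply le_bot_iff.1
        have hle1 : a \ u₀ ≤ a \ u := by
          rw [le_sdiff]
          constructor
          · exact sdiff_le
          · rw [hudef, disjoint_sup_right]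
            constructor
            · have : a \ u₀ ⊓ (v ⊓ c) ≤ a ⊓ c := inf_le_inf sdiff_le inf_le_right
              exact disjoint_iff.2 (le_bot_iff.1 (le_trans this (le_of_eq hac)))
            · have : a \ u₀ ⊓ (u₀ ⊓ cᶜ) ≤ u₀ᶜ ⊓ u₀ := by
                apply inf_le_inf
                · rw [sdiff_eq]; exact inf_le_right
                · exact inf_le_left
              exact disjoint_iff.2 (le_bot_iff.1 (by simpa using this))
        exact h0 ▸ hle1
    · -- a ⊓ c ≠ ⊥ : v splits a ⊓ c
      have hacA : a ⊓ c ∈ A := hinfm _ haA _ hcA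
      have hkey1 : a ⊓ c ⊓ v ≠ ⊥ := by
        intro h0
        apply hac
        have hle1 : a ⊓ c ≤ vᶜ := by
          rw [le_compl_iff_disjoint_right]
          exact disjoint_iff.2 h0
        have hle2 : a ⊓ c ≤ a₁ := le_sSup ⟨hacA, hle1⟩
        apply le_bot_iff.1
        calc a ⊓ c ≤ a₁ ⊓ c := le_inf hle2 inf_le_right
          _ ≤ a₁ ⊓ a₁ᶜ := inf_le_inf_left _ (by rw [hcdef]; exact compl_le_compl le_sup_right)
          _ = ⊥ := inf_compl_eq_bot
      have hkey2 : a ⊓ c ⊓ vᶜ ≠ ⊥ := by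
        intro h0
        apply hac
        have hle1 : a ⊓ c ≤ v := by
          have : a ⊓ c ≤ vᶜᶜ := by
            rw [le_compl_iff_disjoint_right]
            exact disjoint_iff.2 h0
          simpa using this
        have hle2 : a ⊓ c ≤ a₀ := le_sSup ⟨hacA, hle1⟩
        apply le_bot_iff.1
        calc a ⊓ c ≤ a₀ ⊓ c := le_inf hle2 inf_le_right
          _ ≤ a₀ ⊓ a₀ᶜ := inf_le_inf_left _ (by rw [hcdef]; exact compl_le_compl le_sup_left)
          _ = ⊥ := inf_compl_eq_bot
      constructor
      · intro h0
        apply hkey1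
        apply le_bot_iff.1
        have hle1 : a ⊓ c ⊓ v ≤ a ⊓ u := by
          apply le_inf (le_trans inf_le_left inf_le_left)
          refine le_trans ?_ (le_sup_left : v ⊓ c ≤ u)
          exact le_inf inf_le_right (le_trans inf_le_left inf_le_right)
        exact h0 ▸ hle1
      · intro h0
        apply hkey2
        apply le_bot_iff.1
        have hle1 : a ⊓ c ⊓ vᶜ ≤ a \ u := by
          rw [le_sdiff]
          constructor
          · exact le_trans inf_le_left inf_le_left
          · rw [hudef, disjoint_sup_right]
            constructor
            · have : a ⊓ c ⊓ vᶜ ⊓ (v ⊓ c) ≤ vᶜ ⊓ v := inf_le_inf inf_le_right inf_le_left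
              exact disjoint_iff.2 (le_bot_iff.1 (by simpa using this))
            · have : a ⊓ c ⊓ vᶜ ⊓ (u₀ ⊓ cᶜ) ≤ c ⊓ cᶜ :=
                inf_le_inf (le_trans inf_le_left inf_le_right) inf_le_right
              exact disjoint_iff.2 (le_bot_iff.1 (by simpa using this))
        exact h0 ▸ hle1
  refine ⟨u, hsplit, c ⊔ a₀, hsupm _ hcA _ ha₀A, a₀, ha₀A, ?_⟩
  -- v = (c ⊔ a₀) ⊓ u ⊔ a₀ \ u
  have hcu : c ⊓ u = v ⊓ c := by
    rw [hudef, inf_sup_left]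
    have h1 : c ⊓ (v ⊓ c) = v ⊓ c := by rw [inf_comm, inf_assoc, inf_idem]
    have h2 : c ⊓ (u₀ ⊓ cᶜ) = ⊥ := by
      apply le_bot_iff.1
      calc c ⊓ (u₀ ⊓ cᶜ) ≤ c ⊓ cᶜ := inf_le_inf_left _ inf_le_right
        _ = ⊥ := inf_compl_eq_bot
    rw [h1, h2, sup_bot_eq]
  have hvc : v ⊓ cᶜ = a₀ := by
    rw [hcdef, compl_compl, inf_sup_left]
    have h1 : v ⊓ a₀ = a₀ := inf_eq_right.2 ha₀v
    have h2 : v ⊓ a₁ = ⊥ := by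
      apply le_bot_iff.1
      calc v ⊓ a₁ ≤ v ⊓ vᶜ := inf_le_inf_left _ ha₁v
        _ = ⊥ := inf_compl_eq_bot
    rw [h1, h2, sup_bot_eq]
  calc v = v ⊓ c ⊔ v ⊓ cᶜ := by rw [← inf_sup_left, sup_compl_eq_top, inf_top_eq]
    _ = v ⊓ c ⊔ a₀ := by rw [hvc]
    _ = c ⊓ u ⊔ (a₀ ⊓ u ⊔ a₀ \ u) := by rw [hcu, sup_inf_sdiff]
    _ = (c ⊔ a₀) ⊓ u ⊔ a₀ \ u := by rw [inf_sup_right, sup_assoc]
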